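/- arXiv:2401.14653 — 2 statements merged into one kernel-verified Lean document; each statement's English description precedes it below -/
import Mathlib

section
/- For every even integer n ≥ 8, the path P_n on n vertices satisfies 4 ≤ χ_lt(P_n) ≤ 5. -/
open scoped Classical

namespace LTA

variable {V : Type*} {W : Type*}

/-- The induced weight of an edge: the sum of the labels of its two endpoints. -/
noncomputable def eWeight (fV : V → ℕ) : Sym2 V → ℕ :=
  Sym2.lift ⟨fun a b => fV a + fV b, fun a b => Nat.add_comm _ _⟩

/-- The induced weight of a vertex: the sum of the labels of its incident edges. -/
noncomputable def vWeight [Fintype V] (G : SimpleGraph V) (fE : Sym2 V → ℕ) (v : V) : ℕ :=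
  ∑ e ∈ G.edgeFinset, if v ∈ e then fE e else 0

/-- A total labeling: the labels form a bijection from `V ∪ E` onto `{1, …, p + q}`. -/
def IsTotalLabeling [Fintype V] (G : SimpleGraph V) (fV : V → ℕ) (fE : Sym2 V → ℕ) : Prop :=
  Function.Injective (Sum.elim fV (fun e : G.edgeSet => fE e.1)) ∧
    Set.range (Sum.elim fV (fun e : G.edgeSet => fE e.1)) =
      Set.Icc 1 (Fintype.card V + G.edgeFinset.card)

/-- A local total antimagic labeling. -/
def IsLocalTotalAntimagic [Fintype V] (G : SimpleGraph V) (fV : V → ℕ) (fE : Sym2 V → ℕ) :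
    Prop :=
  IsTotalLabeling G fV fE ∧
    (∀ u v, G.Adj u v → vWeight G fE u ≠ vWeight G fE v) ∧
    (∀ e₁ ∈ G.edgeSet, ∀ e₂ ∈ G.edgeSet, e₁ ≠ e₂ → (∃ v, v ∈ e₁ ∧ v ∈ e₂) →
      eWeight fV e₁ ≠ eWeight fV e₂) ∧
    (∀ v : V, ∀ e ∈ G.edgeSet, v ∈ e → vWeight G fE v ≠ eWeight fV e)

/-- The number of distinct induced weights of a total labeling. -/
noncomputable def weightCount [Fintype V] (G : SimpleGraph V) (fV : V → ℕ)
    (fE : Sym2 V → ℕ) : ℕ :=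
  (Finset.image (vWeight G fE) Finset.univ ∪ Finset.image (eWeight fV) G.edgeFinset).card

/-- The local total antimagic chromatic number `χ_lt`. -/
noncomputable def chiLT [Fintype V] (G : SimpleGraph V) : ℕ :=
  sInf {n | ∃ fV fE, IsLocalTotalAntimagic G fV fE ∧ weightCount G fV fE = n}

/-- A pendant edge: an edge incident to a vertex of degree 1. -/
def IsPendantEdge [Fintype V] (G : SimpleGraph V) (e : Sym2 V) : Prop :=
  e ∈ G.edgeSet ∧ ∃ v ∈ e, G.degree v = 1

/-- The number of pendant edges of `G`. -/
noncomputable def pendantEdgeCount [Fintype V] (G : SimpleGraph V) : ℕ :=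
  (G.edgeFinset.filter fun e => ∃ v ∈ e, G.degree v = 1).card

/-- A local antimagic (edge) labeling: a bijection from the edges onto `{1, …, q}` such that
adjacent vertices get distinct induced vertex weights. -/
def IsLocalAntimagic [Fintype V] (G : SimpleGraph V) (fE : Sym2 V → ℕ) : Prop :=
  Set.InjOn fE G.edgeSet ∧ fE '' G.edgeSet = Set.Icc 1 G.edgeFinset.card ∧
    ∀ u v, G.Adj u v → vWeight G fE u ≠ vWeight G fE v

/-- The local antimagic chromatic number `χ_la`. -/
noncomputable def chiLA [Fintype V] (G : SimpleGraph V) : ℕ :=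
  sInf {n | ∃ fE, IsLocalAntimagic G fE ∧ (Finset.image (vWeight G fE) Finset.univ).card = n}

/-- A local edge antimagic (vertex) labeling: a bijection from the vertices onto `{1, …, p}`
such that edges sharing an endpoint get distinct induced edge weights. -/
def IsLocalEdgeAntimagic [Fintype V] (G : SimpleGraph V) (fV : V → ℕ) : Prop :=
  Function.Injective fV ∧ Set.range fV = Set.Icc 1 (Fintype.card V) ∧
    ∀ e₁ ∈ G.edgeSet, ∀ e₂ ∈ G.edgeSet, e₁ ≠ e₂ → (∃ v, v ∈ e₁ ∧ v ∈ e₂) →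
      eWeight fV e₁ ≠ eWeight fV e₂

/-- The local edge antimagic chromatic number `χ_lea`. -/
noncomputable def chiLEA [Fintype V] (G : SimpleGraph V) : ℕ :=
  sInf {n | ∃ fV, IsLocalEdgeAntimagic G fV ∧ (Finset.image (eWeight fV) G.edgeFinset).card = n}

/-- The disjoint union of `m` copies of `G`. -/
def copies (m : ℕ) (G : SimpleGraph V) : SimpleGraph (Fin m × V) where
  Adj x y := x.1 = y.1 ∧ G.Adj x.2 y.2
  symm := ⟨fun x y h => ⟨h.1.symm, h.2.symm⟩⟩
  loopless := ⟨fun x h => G.irrefl h.2⟩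

/-- The graph obtained from `G` by attaching `s` pendant edges to the vertex `v`. -/
def attachPendants (G : SimpleGraph V) (v : V) (s : ℕ) : SimpleGraph (V ⊕ Fin s) :=
  SimpleGraph.fromRel (fun x y =>
    (∃ a b, G.Adj a b ∧ x = Sum.inl a ∧ y = Sum.inl b) ∨
    (∃ i : Fin s, x = Sum.inl v ∧ y = Sum.inr i))

/-- The fan graph `f_n` (n triangles sharing a common vertex) with `k` pendant edges attached
to every degree-2 vertex: `f_n(k)`.  The common vertex is `Sum.inl none`, the outer vertices
are `Sum.inl (some w)`, and the pendant vertices are `Sum.inr (w, t)`. -/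
def fanGraph (n k : ℕ) :
    SimpleGraph (Option (Fin n × Fin 2) ⊕ (Fin n × Fin 2) × Fin k) :=
  SimpleGraph.fromRel (fun x y =>
    (∃ w, x = Sum.inl none ∧ y = Sum.inl (some w)) ∨
    (∃ i : Fin n, x = Sum.inl (some (i, 0)) ∧ y = Sum.inl (some (i, 1))) ∨
    (∃ w t, x = Sum.inl (some w) ∧ y = Sum.inr (w, t)))

open SimpleGraph

/-- the `i`-th edge of the path graph -/
def pe (n : ℕ) (i : Fin (n-1)) : Sym2 (Fin n) :=
  s(⟨i.1, lt_of_lt_of_le i.2 (Nat.sub_le n 1)⟩, ⟨i.1+1, Nat.add_lt_of_lt_sub i.2⟩)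

lemma pe_injective (n : ℕ) : Function.Injective (pe n) := by
  intro i j h
  simp only [pe, Sym2.eq_iff, Prod.mk.injEq, Prod.swap_prod_mk, Fin.mk.injEq] at h
  exact Fin.ext (by omega)

lemma pe_mem_edgeSet (n : ℕ) (i : Fin (n-1)) : pe n i ∈ (pathGraph n).edgeSet := by
  rw [pe, mem_edgeSet, pathGraph_adj]
  left; rfl

lemma mem_path_edgeSet (n : ℕ) (e : Sym2 (Fin n)) :
    e ∈ (pathGraph n).edgeSet ↔ ∃ i : Fin (n-1), e = pe n i := by
  constructor
  · refine Sym2.ind (fun a b hab => ?_) e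
    rw [mem_edgeSet, pathGraph_adj] at hab
    rcases hab with h | h
    · have hb := b.2
      refine ⟨⟨a.1, by omega⟩, ?_⟩
      rw [pe, Sym2.eq_iff]
      left
      exact ⟨Fin.ext rfl, Fin.ext h.symm⟩
    · have ha := a.2
      refine ⟨⟨b.1, by omega⟩, ?_⟩
      rw [pe, Sym2.eq_iff]
      right
      exact ⟨Fin.ext h.symm, Fin.ext rfl⟩
  · rintro ⟨i, rfl⟩; exact pe_mem_edgeSet n i

lemma path_edgeFinset (n : ℕ) :
    (pathGraph n).edgeFinset = Finset.image (pe n) Finset.univ := by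
  ext e
  simp [Set.mem_toFinset, mem_path_edgeSet, eq_comm]

lemma path_card_edgeFinset (n : ℕ) : (pathGraph n).edgeFinset.card = n - 1 := by
  rw [path_edgeFinset, Finset.card_image_of_injective _ (pe_injective n),
    Finset.card_univ, Fintype.card_fin]

lemma mem_pe_iff (n : ℕ) (v : Fin n) (i : Fin (n-1)) :
    v ∈ pe n i ↔ v.1 = i.1 ∨ v.1 = i.1 + 1 := by
  rw [pe, Sym2.mem_iff, Fin.ext_iff, Fin.ext_iff]

lemma vWeight_eq_sum (n : ℕ) (fE : Sym2 (Fin n) → ℕ) (v : Fin n) :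
    vWeight (pathGraph n) fE v
      = ∑ i : Fin (n-1), if v ∈ pe n i then fE (pe n i) else 0 := by
  rw [vWeight, path_edgeFinset,
    Finset.sum_image (fun x _ y _ h => pe_injective n h)]
  exact Finset.sum_congr rfl fun i _ => by congr 1

lemma vWeight_first (n : ℕ) (hn : 2 ≤ n) (fE : Sym2 (Fin n) → ℕ) :
    vWeight (pathGraph n) fE ⟨0, by omega⟩ = fE (pe n ⟨0, by omega⟩) := by
  rw [vWeight_eq_sum]
  rw [Finset.sum_eq_single (⟨0, by omega⟩ : Fin (n-1))]
  · rw [if_pos (by rw [mem_pe_iff]; left; rfl)]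
  · intro i _ hi
    rw [if_neg]
    rw [mem_pe_iff]
    push_neg
    have h1 : i.1 ≠ 0 := fun h => hi (Fin.ext h)
    refine ⟨?_, ?_⟩ <;> · show ¬ ((0:ℕ) = _); omega
  · intro h; exact absurd (Finset.mem_univ _) h

lemma vWeight_last (n : ℕ) (hn : 2 ≤ n) (fE : Sym2 (Fin n) → ℕ) :
    vWeight (pathGraph n) fE ⟨n-1, by omega⟩ = fE (pe n ⟨n-2, by omega⟩) := by
  rw [vWeight_eq_sum]
  rw [Finset.sum_eq_single (⟨n-2, by omega⟩ : Fin (n-1))]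
  · rw [if_pos (by rw [mem_pe_iff]; right; simp; omega)]
  · intro i _ hi
    rw [if_neg]
    rw [mem_pe_iff]
    push_neg
    have hi2 := i.2
    have h1 : i.1 ≠ n-2 := fun h => hi (Fin.ext h)
    constructor <;> simp <;> omega
  · intro h; exact absurd (Finset.mem_univ _) h

lemma vWeight_interior (n : ℕ) (k : ℕ) (h1 : 1 ≤ k) (h2 : k + 1 < n)
    (fE : Sym2 (Fin n) → ℕ) :
    vWeight (pathGraph n) fE ⟨k, by omega⟩
      = fE (pe n ⟨k-1, by omega⟩) + fE (pe n ⟨k, by omega⟩) := by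
  rw [vWeight_eq_sum]
  rw [Finset.sum_eq_add_of_mem (⟨k-1, by omega⟩ : Fin (n-1)) (⟨k, by omega⟩ : Fin (n-1))
    (Finset.mem_univ _) (Finset.mem_univ _)
    (by intro h; have := congrArg Fin.val h; simp at this; omega)]
  · rw [if_pos (by rw [mem_pe_iff]; right; simp; omega),
      if_pos (by rw [mem_pe_iff]; left; rfl)]
  · intro i _ hi
    rw [if_neg]
    rw [mem_pe_iff]
    push_neg
    have h3 : i.1 ≠ k - 1 := fun h => hi.1 (Fin.ext h)
    have h4 : i.1 ≠ k := fun h => hi.2 (Fin.ext h)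
    constructor <;> simp <;> omega

lemma eWeight_pe (n : ℕ) (fV : Fin n → ℕ) (i : Fin (n-1)) :
    eWeight fV (pe n i)
      = fV ⟨i.1, lt_of_lt_of_le i.2 (Nat.sub_le n 1)⟩
        + fV ⟨i.1+1, Nat.add_lt_of_lt_sub i.2⟩ := rfl

lemma lower_bound (n : ℕ) (hn : 8 ≤ n) (fV : Fin n → ℕ) (fE : Sym2 (Fin n) → ℕ)
    (h : IsLocalTotalAntimagic (pathGraph n) fV fE) :
    4 ≤ weightCount (pathGraph n) fV fE := by
  by_contra hlt
  push_neg at hlt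
  have p0 : (0:ℕ) < n - 1 := by omega
  have p1 : (1:ℕ) < n - 1 := by omega
  have p2 : (2:ℕ) < n - 1 := by omega
  have p3 : (3:ℕ) < n - 1 := by omega
  have p4 : (4:ℕ) < n - 1 := by omega
  have p5 : (5:ℕ) < n - 1 := by omega
  have q0 : (0:ℕ) < n := by omega
  have q1 : (1:ℕ) < n := by omega
  have q2 : (2:ℕ) < n := by omega
  have q3 : (3:ℕ) < n := by omega
  have q4 : (4:ℕ) < n := by omega
  have q5 : (5:ℕ) < n := by omega
  set T := Finset.image (vWeight (pathGraph n) fE) Finset.univ ∪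
      Finset.image (eWeight fV) (pathGraph n).edgeFinset with hT
  have hcard : T.card ≤ 3 := by
    have : weightCount (pathGraph n) fV fE = T.card := rfl
    omega
  have hWmem : ∀ v : Fin n, vWeight (pathGraph n) fE v ∈ T := fun v =>
    Finset.mem_union_left _ (Finset.mem_image_of_mem _ (Finset.mem_univ v))
  have hEmem : ∀ i : Fin (n-1), eWeight fV (pe n i) ∈ T := fun i =>
    Finset.mem_union_right _ (Finset.mem_image_of_mem _
      (by rw [SimpleGraph.mem_edgeFinset]; exact pe_mem_edgeSet n i))
  -- weights
  have w0 : vWeight (pathGraph n) fE ⟨0, q0⟩ = fE (pe n ⟨0, p0⟩) :=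
    vWeight_first n (by omega) fE
  have w1 : vWeight (pathGraph n) fE ⟨1, q1⟩ = fE (pe n ⟨0, p0⟩) + fE (pe n ⟨1, p1⟩) :=
    vWeight_interior n 1 (by omega) (by omega) fE
  have w2 : vWeight (pathGraph n) fE ⟨2, q2⟩ = fE (pe n ⟨1, p1⟩) + fE (pe n ⟨2, p2⟩) :=
    vWeight_interior n 2 (by omega) (by omega) fE
  have w3 : vWeight (pathGraph n) fE ⟨3, q3⟩ = fE (pe n ⟨2, p2⟩) + fE (pe n ⟨3, p3⟩) :=
    vWeight_interior n 3 (by omega) (by omega) fE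
  have w4 : vWeight (pathGraph n) fE ⟨4, q4⟩ = fE (pe n ⟨3, p3⟩) + fE (pe n ⟨4, p4⟩) :=
    vWeight_interior n 4 (by omega) (by omega) fE
  have w5 : vWeight (pathGraph n) fE ⟨5, q5⟩ = fE (pe n ⟨4, p4⟩) + fE (pe n ⟨5, p5⟩) :=
    vWeight_interior n 5 (by omega) (by omega) fE
  -- adjacency of consecutive vertices
  have adj : ∀ (a b : Fin n), a.1 + 1 = b.1 → (pathGraph n).Adj a b := by
    intro a b hab; rw [SimpleGraph.pathGraph_adj]; left; exact hab
  -- vertex-weight inequalities for adjacent vertices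
  have vne01 := h.2.1 _ _ (adj ⟨0,q0⟩ ⟨1,q1⟩ rfl)
  have vne12 := h.2.1 _ _ (adj ⟨1,q1⟩ ⟨2,q2⟩ rfl)
  have vne23 := h.2.1 _ _ (adj ⟨2,q2⟩ ⟨3,q3⟩ rfl)
  have vne34 := h.2.1 _ _ (adj ⟨3,q3⟩ ⟨4,q4⟩ rfl)
  have vne45 := h.2.1 _ _ (adj ⟨4,q4⟩ ⟨5,q5⟩ rfl)
  -- edge-weight inequalities for consecutive edges
  have ene : ∀ (i j : Fin (n-1)), i.1 + 1 = j.1 →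
      eWeight fV (pe n i) ≠ eWeight fV (pe n j) := by
    intro i j hij
    refine h.2.2.1 _ (pe_mem_edgeSet n i) _ (pe_mem_edgeSet n j) ?_ ?_
    · intro hh
      have := pe_injective n hh
      rw [Fin.ext_iff] at this
      omega
    · exact ⟨⟨j.1, lt_of_lt_of_le j.2 (Nat.sub_le n 1)⟩,
        by rw [mem_pe_iff]; right; exact hij.symm, by rw [mem_pe_iff]; left; rfl⟩
  have ene01 := ene ⟨0,p0⟩ ⟨1,p1⟩ rfl
  have ene12 := ene ⟨1,p1⟩ ⟨2,p2⟩ rfl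
  have ene23 := ene ⟨2,p2⟩ ⟨3,p3⟩ rfl
  have ene34 := ene ⟨3,p3⟩ ⟨4,p4⟩ rfl
  -- vertex/incident-edge inequalities
  have ive : ∀ (v : Fin n) (i : Fin (n-1)), v.1 = i.1 ∨ v.1 = i.1 + 1 →
      vWeight (pathGraph n) fE v ≠ eWeight fV (pe n i) := by
    intro v i hvi
    exact h.2.2.2 v _ (pe_mem_edgeSet n i) ((mem_pe_iff n v i).2 hvi)
  have ive00 := ive ⟨0,q0⟩ ⟨0,p0⟩ (Or.inl rfl)
  have ive10 := ive ⟨1,q1⟩ ⟨0,p0⟩ (Or.inr rfl)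
  have ive11 := ive ⟨1,q1⟩ ⟨1,p1⟩ (Or.inl rfl)
  have ive21 := ive ⟨2,q2⟩ ⟨1,p1⟩ (Or.inr rfl)
  have ive22 := ive ⟨2,q2⟩ ⟨2,p2⟩ (Or.inl rfl)
  have ive32 := ive ⟨3,q3⟩ ⟨2,p2⟩ (Or.inr rfl)
  have ive33 := ive ⟨3,q3⟩ ⟨3,p3⟩ (Or.inl rfl)
  have ive43 := ive ⟨4,q4⟩ ⟨3,p3⟩ (Or.inr rfl)
  have ive44 := ive ⟨4,q4⟩ ⟨4,p4⟩ (Or.inl rfl)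
  have ive54 := ive ⟨5,q5⟩ ⟨4,p4⟩ (Or.inr rfl)
  -- the three distinct weights
  set a := vWeight (pathGraph n) fE ⟨0, q0⟩ with ha
  set b := vWeight (pathGraph n) fE ⟨1, q1⟩ with hb
  set c := eWeight fV (pe n ⟨0, p0⟩) with hc
  have htriple : ({a, b, c} : Finset ℕ) ⊆ T := by
    intro x hx
    simp only [Finset.mem_insert, Finset.mem_singleton] at hx
    rcases hx with rfl | rfl | rfl
    · exact hWmem _
    · exact hWmem _
    · exact hEmem _
  have hcard3 : ({a, b, c} : Finset ℕ).card = 3 := by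
    rw [Finset.card_insert_of_notMem, Finset.card_insert_of_notMem,
      Finset.card_singleton]
    · simp only [Finset.mem_singleton]; exact ive10
    · simp only [Finset.mem_insert, Finset.mem_singleton]
      push_neg
      exact ⟨vne01, ive00⟩
  have hTeq : ({a, b, c} : Finset ℕ) = T :=
    Finset.eq_of_subset_of_card_le htriple (by omega)
  have key : ∀ x ∈ T, x = a ∨ x = b ∨ x = c := by
    intro x hx
    rw [← hTeq] at hx
    simpa using hx
  -- the forced chain of weights
  have hE1 : eWeight fV (pe n ⟨1, p1⟩) = a := by
    rcases key _ (hEmem ⟨1,p1⟩) with hh | hh | hh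
    · exact hh
    · exact absurd hh.symm ive11
    · exact absurd hh.symm ene01
  have hW2 : vWeight (pathGraph n) fE ⟨2, q2⟩ = c := by
    rcases key _ (hWmem ⟨2,q2⟩) with hh | hh | hh
    · exact absurd (hh.trans hE1.symm) ive21
    · exact absurd hh.symm vne12
    · exact hh
  have hE2 : eWeight fV (pe n ⟨2, p2⟩) = b := by
    rcases key _ (hEmem ⟨2,p2⟩) with hh | hh | hh
    · exact absurd (hE1.trans hh.symm) ene12
    · exact hh
    · exact absurd (hW2.trans hh.symm) ive22
  have hW3 : vWeight (pathGraph n) fE ⟨3, q3⟩ = a := by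
    rcases key _ (hWmem ⟨3,q3⟩) with hh | hh | hh
    · exact hh
    · exact absurd (hh.trans hE2.symm) ive32
    · exact absurd (hW2.trans hh.symm) vne23
  have hE3 : eWeight fV (pe n ⟨3, p3⟩) = c := by
    rcases key _ (hEmem ⟨3,p3⟩) with hh | hh | hh
    · exact absurd (hW3.trans hh.symm) ive33
    · exact absurd (hE2.trans hh.symm) ene23
    · exact hh
  have hW4 : vWeight (pathGraph n) fE ⟨4, q4⟩ = b := by
    rcases key _ (hWmem ⟨4,q4⟩) with hh | hh | hh
    · exact absurd (hW3.trans hh.symm) vne34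
    · exact hh
    · exact absurd (hh.trans hE3.symm) ive43
  have hE4 : eWeight fV (pe n ⟨4, p4⟩) = a := by
    rcases key _ (hEmem ⟨4,p4⟩) with hh | hh | hh
    · exact hh
    · exact absurd (hW4.trans hh.symm) ive44
    · exact absurd (hE3.trans hh.symm) ene34
  have hW5 : vWeight (pathGraph n) fE ⟨5, q5⟩ = c := by
    rcases key _ (hWmem ⟨5,q5⟩) with hh | hh | hh
    · exact absurd (hh.trans hE4.symm) ive54
    · exact absurd (hW4.trans hh.symm) vne45
    · exact hh
  -- positivity of the last edge label
  have hf5 : 1 ≤ fE (pe n ⟨5, p5⟩) := by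
    have hmem : Sum.elim fV (fun e : (pathGraph n).edgeSet => fE e.1)
        (Sum.inr ⟨pe n ⟨5, p5⟩, pe_mem_edgeSet n _⟩) ∈
        Set.Icc 1 (Fintype.card (Fin n) + (pathGraph n).edgeFinset.card) := by
      rw [← h.1.2]
      exact Set.mem_range_self _
    exact hmem.1
  omega


/-- edge label for the edge between `i` and `i+1` -/
def upF (n i : ℕ) : ℕ := if i % 2 = 0 then i + 1 else n - 1 - i

/-- vertex labels -/
def upfV (n : ℕ) (v : Fin n) : ℕ :=
  if v.1 % 2 = 0 then n + v.1/2 else 2*n - (v.1+1)/2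

/-- edge labels as a function on `Sym2` -/
def upfE (n : ℕ) : Sym2 (Fin n) → ℕ :=
  Sym2.lift ⟨fun a b => if a.1+1 = b.1 then upF n a.1
      else if b.1+1 = a.1 then upF n b.1 else 0, by
    intro a b
    dsimp only
    rcases eq_or_ne (a.1+1) b.1 with h1 | h1 <;> rcases eq_or_ne (b.1+1) a.1 with h2 | h2
    · exact absurd h2 (by omega)
    · rw [if_pos h1, if_neg h2, if_pos h1]
    · rw [if_neg h1, if_pos h2, if_pos h2]
    · rw [if_neg h1, if_neg h2, if_neg h2, if_neg h1]⟩

lemma upfE_pe (n : ℕ) (i : Fin (n-1)) : upfE n (pe n i) = upF n i.1 := by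
  rw [pe, upfE, Sym2.lift_mk]
  exact if_pos rfl

lemma vweight_val (n : ℕ) (hn : 8 ≤ n) (he : n % 2 = 0) (v : Fin n) :
    vWeight (pathGraph n) (upfE n) v
      = if v.1 = 0 then 1 else if v.1 % 2 = 1 then n - 1 else n + 1 := by
  by_cases h0 : v.1 = 0
  · have hv : v = ⟨0, by omega⟩ := Fin.ext h0
    rw [hv, vWeight_first n (by omega), upfE_pe]
    rw [if_pos rfl]
    show upF n 0 = 1
    rw [upF, if_pos rfl]
  · by_cases hl : v.1 = n - 1
    · have hv : v = ⟨n-1, by omega⟩ := Fin.ext hl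
      rw [hv, vWeight_last n (by omega), upfE_pe]
      show upF n (n-2) = if (n-1:ℕ) = 0 then 1 else if (n-1) % 2 = 1 then n - 1 else n + 1
      rw [upF, if_pos (by omega), if_neg (by omega), if_pos (by omega)]
      omega
    · have hv1 : 1 ≤ v.1 := by omega
      have hv2 : v.1 + 1 < n := by have := v.2; omega
      have hw : vWeight (pathGraph n) (upfE n) v
          = upfE n (pe n ⟨v.1-1, by omega⟩) + upfE n (pe n ⟨v.1, by omega⟩) :=
        vWeight_interior n v.1 hv1 hv2 (upfE n)
      rw [hw, upfE_pe, upfE_pe]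
      show upF n (v.1-1) + upF n v.1 = _
      rw [upF, upF]
      split_ifs <;> omega

lemma eweight_val (n : ℕ) (hn : 8 ≤ n) (he : n % 2 = 0) (i : Fin (n-1)) :
    eWeight (upfV n) (pe n i) = if i.1 % 2 = 0 then 3*n - 1 else 3*n := by
  rw [eWeight_pe]
  have hi := i.2
  show (if i.1 % 2 = 0 then n + i.1/2 else 2*n - (i.1+1)/2)
    + (if (i.1+1) % 2 = 0 then n + (i.1+1)/2 else 2*n - (i.1+1+1)/2) = _
  split_ifs <;> omega

lemma upper_bound (n : ℕ) (hn : 8 ≤ n) (he : n % 2 = 0) :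
    IsLocalTotalAntimagic (pathGraph n) (upfV n) (upfE n) ∧
      weightCount (pathGraph n) (upfV n) (upfE n) ≤ 5 := by
  have hrep : ∀ e : (pathGraph n).edgeSet, ∃ i : Fin (n-1), e.1 = pe n i :=
    fun e => (mem_path_edgeSet n e.1).1 e.2
  constructor
  · refine ⟨⟨?_, ?_⟩, ?_, ?_, ?_⟩
    · -- injectivity
      rintro (a | e) (b | e') hxy
      · simp only [Sum.elim_inl] at hxy
        congr 1
        apply Fin.ext
        have ha := a.2; have hb := b.2
        rw [upfV, upfV] at hxy
        split_ifs at hxy <;> omega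
      · exfalso
        obtain ⟨i, hi⟩ := hrep e'
        simp only [Sum.elim_inl, Sum.elim_inr, hi, upfE_pe] at hxy
        have ha := a.2; have hii := i.2
        rw [upfV, upF] at hxy
        split_ifs at hxy <;> omega
      · exfalso
        obtain ⟨i, hi⟩ := hrep e
        simp only [Sum.elim_inl, Sum.elim_inr, hi, upfE_pe] at hxy
        have hb := b.2; have hii := i.2
        rw [upfV, upF] at hxy
        split_ifs at hxy <;> omega
      · obtain ⟨i, hi⟩ := hrep e
        obtain ⟨j, hj⟩ := hrep e'
        simp only [Sum.elim_inr, hi, hj, upfE_pe] at hxy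
        have hii := i.2; have hjj := j.2
        have hij : i = j := by
          apply Fin.ext
          rw [upF, upF] at hxy
          split_ifs at hxy <;> omega
        congr 1
        exact Subtype.ext (by rw [hi, hj, hij])
    · -- range
      rw [Fintype.card_fin, path_card_edgeFinset]
      ext x
      simp only [Set.mem_range, Set.mem_Icc]
      constructor
      · rintro ⟨(a | e), rfl⟩
        · have ha := a.2
          simp only [Sum.elim_inl]
          rw [upfV]
          split_ifs <;> omega
        · obtain ⟨i, hi⟩ := hrep e
          have hii := i.2
          simp only [Sum.elim_inr, hi, upfE_pe]
          rw [upF]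
          split_ifs <;> omega
      · rintro ⟨hx1, hx2⟩
        by_cases hxn : n ≤ x
        · by_cases hx3 : x < n + n/2
          · refine ⟨Sum.inl ⟨2*(x-n), by omega⟩, ?_⟩
            show (if (2*(x-n)) % 2 = 0 then n + (2*(x-n))/2 else 2*n - (2*(x-n)+1)/2) = x
            rw [if_pos (by omega)]
            omega
          · refine ⟨Sum.inl ⟨4*n-2*x-1, by omega⟩, ?_⟩
            show (if (4*n-2*x-1) % 2 = 0 then n + (4*n-2*x-1)/2
              else 2*n - ((4*n-2*x-1)+1)/2) = x
            rw [if_neg (by omega)]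
            omega
        · by_cases hx3 : x % 2 = 1
          · refine ⟨Sum.inr ⟨pe n ⟨x-1, by omega⟩, pe_mem_edgeSet n _⟩, ?_⟩
            show upfE n (pe n ⟨x-1, by omega⟩) = x
            rw [upfE_pe]
            show (if (x-1) % 2 = 0 then (x-1)+1 else n-1-(x-1)) = x
            rw [if_pos (by omega)]
            omega
          · refine ⟨Sum.inr ⟨pe n ⟨n-1-x, by omega⟩, pe_mem_edgeSet n _⟩, ?_⟩
            show upfE n (pe n ⟨n-1-x, by omega⟩) = x
            rw [upfE_pe]
            show (if (n-1-x) % 2 = 0 then (n-1-x)+1 else n-1-(n-1-x)) = x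
            rw [if_neg (by omega)]
            omega
    · -- adjacent vertices
      intro u v huv
      rw [SimpleGraph.pathGraph_adj] at huv
      rw [vweight_val n hn he, vweight_val n hn he]
      have hu := u.2; have hv := v.2
      split_ifs <;> omega
    · -- adjacent edges
      intro e1 he1 e2 he2 hne ⟨v, hv1, hv2⟩
      obtain ⟨i, rfl⟩ := (mem_path_edgeSet n e1).1 he1
      obtain ⟨j, rfl⟩ := (mem_path_edgeSet n e2).1 he2
      have hij : i.1 ≠ j.1 := fun hh => hne (by rw [Fin.ext_iff.2 hh])
      rw [mem_pe_iff] at hv1 hv2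
      rw [eweight_val n hn he, eweight_val n hn he]
      split_ifs <;> omega
    · -- vertex vs incident edge
      intro v e hee hve
      obtain ⟨i, rfl⟩ := (mem_path_edgeSet n e).1 hee
      rw [vweight_val n hn he, eweight_val n hn he]
      split_ifs <;> omega
  · -- weight count
    have hsub : (Finset.image (vWeight (pathGraph n) (upfE n)) Finset.univ ∪
        Finset.image (eWeight (upfV n)) (pathGraph n).edgeFinset)
        ⊆ ({1, n-1, n+1, 3*n-1, 3*n} : Finset ℕ) := by
      intro x hx
      rcases Finset.mem_union.1 hx with hx | hx
      · obtain ⟨v, _, rfl⟩ := Finset.mem_image.1 hx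
        rw [vweight_val n hn he]
        split_ifs <;> simp
      · obtain ⟨e, hee, rfl⟩ := Finset.mem_image.1 hx
        rw [SimpleGraph.mem_edgeFinset] at hee
        obtain ⟨i, rfl⟩ := (mem_path_edgeSet n e).1 hee
        rw [eweight_val n hn he]
        split_ifs <;> simp
    refine le_trans (Finset.card_le_card hsub) ?_
    refine le_trans (Finset.card_insert_le _ _) (Nat.succ_le_succ ?_)
    refine le_trans (Finset.card_insert_le _ _) (Nat.succ_le_succ ?_)
    refine le_trans (Finset.card_insert_le _ _) (Nat.succ_le_succ ?_)
    refine le_trans (Finset.card_insert_le _ _) (Nat.succ_le_succ ?_)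
    exact le_of_eq (Finset.card_singleton _)


/-- for every even `n ≥ 8`, `4 ≤ χ_lt(P_n) ≤ 5`. -/
theorem stmt7 (n : ℕ) (hn : 8 ≤ n) (heven : Even n) :
    4 ≤ chiLT (SimpleGraph.pathGraph n) ∧ chiLT (SimpleGraph.pathGraph n) ≤ 5 := by
  have he : n % 2 = 0 := Nat.even_iff.mp heven
  obtain ⟨hanti, hwc⟩ := upper_bound n hn he
  have hmem : weightCount (SimpleGraph.pathGraph n) (upfV n) (upfE n) ∈
      {k | ∃ fV fE, IsLocalTotalAntimagic (SimpleGraph.pathGraph n) fV fE ∧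
        weightCount (SimpleGraph.pathGraph n) fV fE = k} := ⟨upfV n, upfE n, hanti, rfl⟩
  constructor
  · refine le_csInf ⟨_, hmem⟩ ?_
    rintro k ⟨fV, fE, hk, rfl⟩
    exact lower_bound n hn fV fE hk
  · exact le_trans (Nat.sInf_le hmem) hwc



end LTA
end

section
/- The cycles C_3 and C_5 satisfy χ_lt(C_3) = 4 and χ_lt(C_5) = 4, and the cycle C_8 satisfies χ_lt(C_8) ≤ 5. -/
open scoped Classical

namespace LTA

variable {V : Type*} {W : Type*}

/-! ### Auxiliary machinery for `stmt12` -/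

section Stmt12Aux

lemma edgeFinset_eq_of [Fintype V] {G : SimpleGraph V} (inst : Fintype G.edgeSet)
    {F : Finset (Sym2 V)} (h : ∀ e, e ∈ F ↔ e ∈ G.edgeSet) :
    @SimpleGraph.edgeFinset V G inst = F := by
  ext e; rw [SimpleGraph.mem_edgeFinset]; exact (h e).symm

lemma vWeight_eq_dec [Fintype V] [DecidableEq V] {G : SimpleGraph V} {fE : Sym2 V → ℕ}
    {F : Finset (Sym2 V)} (h : ∀ e, e ∈ F ↔ e ∈ G.edgeSet) (v : V) :
    vWeight G fE v = ∑ e ∈ F, @ite _ (v ∈ e) (Sym2.Mem.decidable v e) (fE e) 0 := by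
  unfold vWeight; rw [edgeFinset_eq_of _ h]
  exact Finset.sum_congr rfl fun e _ => by congr!

lemma range_eq_Icc {α : Type*} [Fintype α] {g : α → ℕ} {k : ℕ}
    (h : Finset.image g Finset.univ = Finset.Icc 1 k) :
    Set.range g = Set.Icc 1 k := by
  rw [← Set.image_univ, ← Finset.coe_univ, ← Finset.coe_image, h, Finset.coe_Icc]

lemma H1 [Fintype V] {G : SimpleGraph V} {fV : V → ℕ} {fE : Sym2 V → ℕ}
    (h : IsLocalTotalAntimagic G fV fE) {i j : V} (hij : G.Adj i j) :
    vWeight G fE i ≠ eWeight fV s(i,j) :=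
  h.2.2.2 i _ ((SimpleGraph.mem_edgeSet G).mpr hij) (Sym2.mem_mk_left i j)

lemma H2 [Fintype V] {G : SimpleGraph V} {fV : V → ℕ} {fE : Sym2 V → ℕ}
    (h : IsLocalTotalAntimagic G fV fE) {i j : V} (hij : G.Adj i j) :
    vWeight G fE j ≠ eWeight fV s(i,j) :=
  h.2.2.2 j _ ((SimpleGraph.mem_edgeSet G).mpr hij) (Sym2.mem_mk_right i j)

lemma H3 [Fintype V] {G : SimpleGraph V} {fV : V → ℕ} {fE : Sym2 V → ℕ}
    (h : IsLocalTotalAntimagic G fV fE) {i j : V} (hij : G.Adj i j) :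
    vWeight G fE i ≠ vWeight G fE j := h.2.1 i j hij

lemma H4 [Fintype V] {G : SimpleGraph V} {fV : V → ℕ} {fE : Sym2 V → ℕ}
    (h : IsLocalTotalAntimagic G fV fE) {i j k : V} (hij : G.Adj i j) (hjk : G.Adj j k)
    (hik : i ≠ k) : eWeight fV s(i,j) ≠ eWeight fV s(j,k) := by
  refine h.2.2.1 _ ((SimpleGraph.mem_edgeSet G).mpr hij) _ ((SimpleGraph.mem_edgeSet G).mpr hjk)
    (fun hEq => ?_) ⟨j, Sym2.mem_mk_right i j, Sym2.mem_mk_left j k⟩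
  rcases Sym2.eq_iff.mp hEq with ⟨h1, _⟩ | ⟨h1, _⟩
  · exact hij.ne h1
  · exact hik h1

lemma step {T : Finset ℕ} (hT : T.card ≤ 3) {x y z w : ℕ}
    (hx : x ∈ T) (hy : y ∈ T) (hz : z ∈ T) (hw : w ∈ T)
    (hxy : x ≠ y) (hxz : x ≠ z) (hyz : y ≠ z) (hwy : w ≠ y) (hwz : w ≠ z) : w = x := by
  have hsub : ({x, y, z} : Finset ℕ) ⊆ T := by
    intro t ht
    rcases Finset.mem_insert.mp ht with rfl | ht
    · exact hx
    rcases Finset.mem_insert.mp ht with rfl | ht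
    · exact hy
    · rw [Finset.mem_singleton.mp ht]; exact hz
  have hcard : 3 ≤ ({x, y, z} : Finset ℕ).card := by
    rw [Finset.card_insert_of_notMem (by simp [hxy, hxz]),
        Finset.card_insert_of_notMem (by simp [hyz]), Finset.card_singleton]
  have hTeq : ({x, y, z} : Finset ℕ) = T :=
    Finset.eq_of_subset_of_card_le hsub (le_trans hT hcard)
  rw [← hTeq] at hw
  rcases Finset.mem_insert.mp hw with h | h
  · exact h
  rcases Finset.mem_insert.mp h with h | h
  · exact absurd h hwy
  · exact absurd (Finset.mem_singleton.mp h) hwz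

/-! #### Data for `C₃` -/

def m3 : Fin 3 → Fin 3 → ℕ := ![![0,4,6],![4,0,1],![6,1,0]]

def f3 : Sym2 (Fin 3) → ℕ := Sym2.lift ⟨m3, by decide⟩

def v3 : Fin 3 → ℕ := ![2,5,3]

def F3 : Finset (Sym2 (Fin 3)) := {s(0,1), s(1,2), s(0,2)}

lemma hF3 : ∀ e, e ∈ F3 ↔ e ∈ (SimpleGraph.cycleGraph 3).edgeSet := by decide

def W3 : Fin 3 → ℕ := ![10,5,7]

lemma hv3 : ∀ v, vWeight (SimpleGraph.cycleGraph 3) f3 v = W3 v := by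
  intro v; rw [vWeight_eq_dec hF3]; revert v; decide

lemma hlta3 : IsLocalTotalAntimagic (SimpleGraph.cycleGraph 3) v3 f3 := by
  refine ⟨⟨by decide, ?_⟩, ?_, by decide, ?_⟩
  · rw [edgeFinset_eq_of _ hF3]
    exact range_eq_Icc (by decide)
  · simp only [hv3]; decide
  · simp only [hv3]; decide

lemma hwc3 : weightCount (SimpleGraph.cycleGraph 3) v3 f3 = 4 := by
  unfold weightCount
  rw [Finset.image_congr (g := W3) (fun v _ => hv3 v), edgeFinset_eq_of _ hF3]
  decide

/-! #### Data for `C₅` -/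

def m5 : Fin 5 → Fin 5 → ℕ :=
  ![![0,10,0,0,4],![10,0,3,0,0],![0,3,0,5,0],![0,0,5,0,9],![4,0,0,9,0]]

def f5 : Sym2 (Fin 5) → ℕ := Sym2.lift ⟨m5, by decide⟩

def v5 : Fin 5 → ℕ := ![2,6,8,1,7]

def F5 : Finset (Sym2 (Fin 5)) := {s(0,1), s(1,2), s(2,3), s(3,4), s(0,4)}

lemma hF5 : ∀ e, e ∈ F5 ↔ e ∈ (SimpleGraph.cycleGraph 5).edgeSet := by decide

def W5 : Fin 5 → ℕ := ![14,13,8,14,13]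

lemma hv5 : ∀ v, vWeight (SimpleGraph.cycleGraph 5) f5 v = W5 v := by
  intro v; rw [vWeight_eq_dec hF5]; revert v; decide

lemma hlta5 : IsLocalTotalAntimagic (SimpleGraph.cycleGraph 5) v5 f5 := by
  refine ⟨⟨by decide, ?_⟩, ?_, by decide, ?_⟩
  · rw [edgeFinset_eq_of _ hF5]
    exact range_eq_Icc (by decide)
  · simp only [hv5]; decide
  · simp only [hv5]; decide

lemma hwc5 : weightCount (SimpleGraph.cycleGraph 5) v5 f5 = 4 := by
  unfold weightCount
  rw [Finset.image_congr (g := W5) (fun v _ => hv5 v), edgeFinset_eq_of _ hF5]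
  decide

/-! #### Data for `C₈` -/

def m8 : Fin 8 → Fin 8 → ℕ :=
  ![![0,2,0,0,0,0,0,14],![2,0,16,0,0,0,0,0],![0,16,0,1,0,0,0,0],![0,0,1,0,13,0,0,0],
    ![0,0,0,13,0,5,0,0],![0,0,0,0,5,0,15,0],![0,0,0,0,0,15,0,3],![14,0,0,0,0,0,3,0]]

def f8 : Sym2 (Fin 8) → ℕ := Sym2.lift ⟨m8, by decide⟩

def v8 : Fin 8 → ℕ := ![6,11,9,7,10,4,12,8]

def F8 : Finset (Sym2 (Fin 8)) :=
  {s(0,1), s(1,2), s(2,3), s(3,4), s(4,5), s(5,6), s(6,7), s(0,7)}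

lemma hF8 : ∀ e, e ∈ F8 ↔ e ∈ (SimpleGraph.cycleGraph 8).edgeSet := by decide

def W8 : Fin 8 → ℕ := ![16,18,17,14,18,20,18,17]

lemma hv8 : ∀ v, vWeight (SimpleGraph.cycleGraph 8) f8 v = W8 v := by
  intro v; rw [vWeight_eq_dec hF8]; revert v; decide

lemma hlta8 : IsLocalTotalAntimagic (SimpleGraph.cycleGraph 8) v8 f8 := by
  refine ⟨⟨by decide, ?_⟩, ?_, by decide, ?_⟩
  · rw [edgeFinset_eq_of _ hF8]
    exact range_eq_Icc (by decide)
  · simp only [hv8]; decide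
  · simp only [hv8]; decide

lemma hwc8 : weightCount (SimpleGraph.cycleGraph 8) v8 f8 = 5 := by
  unfold weightCount
  rw [Finset.image_congr (g := W8) (fun v _ => hv8 v), edgeFinset_eq_of _ hF8]
  decide

/-! #### Lower bound for `C₅` -/

lemma low5 {fV : Fin 5 → ℕ} {fE : Sym2 (Fin 5) → ℕ}
    (h : IsLocalTotalAntimagic (SimpleGraph.cycleGraph 5) fV fE) :
    4 ≤ weightCount (SimpleGraph.cycleGraph 5) fV fE := by
  by_contra hlt
  push_neg at hlt
  unfold weightCount at hlt
  rw [edgeFinset_eq_of _ hF5] at hlt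
  set G5 := SimpleGraph.cycleGraph 5 with hG5
  set T : Finset ℕ :=
    Finset.image (vWeight G5 fE) Finset.univ ∪ Finset.image (eWeight fV) F5 with hTdef
  have hTc : T.card ≤ 3 := Nat.lt_succ_iff.mp hlt
  have haT : ∀ i : Fin 5, vWeight G5 fE i ∈ T := fun i =>
    Finset.mem_union_left _ (Finset.mem_image_of_mem _ (Finset.mem_univ i))
  have hbT : ∀ i j : Fin 5, G5.Adj i j → eWeight fV s(i,j) ∈ T := fun i j hij =>
    Finset.mem_union_right _
      (Finset.mem_image_of_mem _ ((hF5 _).mpr ((SimpleGraph.mem_edgeSet G5).mpr hij)))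
  have adj01 : G5.Adj 0 1 := by decide
  have adj12 : G5.Adj 1 2 := by decide
  have adj23 : G5.Adj 2 3 := by decide
  have adj34 : G5.Adj 3 4 := by decide
  have adj40 : G5.Adj 4 0 := by decide
  have S1 : eWeight fV s(1,2) = vWeight G5 fE 0 :=
    step hTc (haT 0) (hbT 0 1 adj01) (haT 1) (hbT 1 2 adj12)
      (H1 h adj01) (H3 h adj01) (H2 h adj01).symm
      (H4 h adj01 adj12 (by decide)).symm (H1 h adj12).symm
  have S2 : vWeight G5 fE 2 = eWeight fV s(0,1) :=
    step hTc (hbT 0 1 adj01) (haT 1) (hbT 1 2 adj12) (haT 2)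
      (H2 h adj01).symm (H4 h adj01 adj12 (by decide)) (H1 h adj12)
      (H3 h adj12).symm (H2 h adj12)
  have S3 : eWeight fV s(2,3) = vWeight G5 fE 1 :=
    step hTc (haT 1) (hbT 1 2 adj12) (haT 2) (hbT 2 3 adj23)
      (H1 h adj12) (H3 h adj12) (H2 h adj12).symm
      (H4 h adj12 adj23 (by decide)).symm (H1 h adj23).symm
  have S4 : vWeight G5 fE 3 = eWeight fV s(1,2) :=
    step hTc (hbT 1 2 adj12) (haT 2) (hbT 2 3 adj23) (haT 3)
      (H2 h adj12).symm (H4 h adj12 adj23 (by decide)) (H1 h adj23)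
      (H3 h adj23).symm (H2 h adj23)
  have S5 : eWeight fV s(3,4) = vWeight G5 fE 2 :=
    step hTc (haT 2) (hbT 2 3 adj23) (haT 3) (hbT 3 4 adj34)
      (H1 h adj23) (H3 h adj23) (H2 h adj23).symm
      (H4 h adj23 adj34 (by decide)).symm (H1 h adj34).symm
  have S6 : vWeight G5 fE 4 = eWeight fV s(2,3) :=
    step hTc (hbT 2 3 adj23) (haT 3) (hbT 3 4 adj34) (haT 4)
      (H2 h adj23).symm (H4 h adj23 adj34 (by decide)) (H1 h adj34)
      (H3 h adj34).symm (H2 h adj34)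
  have S7 : eWeight fV s(4,0) = vWeight G5 fE 3 :=
    step hTc (haT 3) (hbT 3 4 adj34) (haT 4) (hbT 4 0 adj40)
      (H1 h adj34) (H3 h adj34) (H2 h adj34).symm
      (H4 h adj34 adj40 (by decide)).symm (H1 h adj40).symm
  have S8 : vWeight G5 fE 0 = eWeight fV s(3,4) :=
    step hTc (hbT 3 4 adj34) (haT 4) (hbT 4 0 adj40) (haT 0)
      (H2 h adj34).symm (H4 h adj34 adj40 (by decide)) (H1 h adj40)
      (H3 h adj40).symm (H2 h adj40)
  exact H1 h adj01 (S8.trans (S5.trans S2))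

/-! #### Lower bound for `C₃` -/

lemma low3 {fV : Fin 3 → ℕ} {fE : Sym2 (Fin 3) → ℕ}
    (h : IsLocalTotalAntimagic (SimpleGraph.cycleGraph 3) fV fE) :
    4 ≤ weightCount (SimpleGraph.cycleGraph 3) fV fE := by
  by_contra hlt
  push_neg at hlt
  unfold weightCount at hlt
  rw [edgeFinset_eq_of _ hF3] at hlt
  set G3 := SimpleGraph.cycleGraph 3 with hG3
  set T : Finset ℕ :=
    Finset.image (vWeight G3 fE) Finset.univ ∪ Finset.image (eWeight fV) F3 with hTdef
  have hTc : T.card ≤ 3 := Nat.lt_succ_iff.mp hlt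
  have haT : ∀ i : Fin 3, vWeight G3 fE i ∈ T := fun i =>
    Finset.mem_union_left _ (Finset.mem_image_of_mem _ (Finset.mem_univ i))
  have hbT : ∀ i j : Fin 3, G3.Adj i j → eWeight fV s(i,j) ∈ T := fun i j hij =>
    Finset.mem_union_right _
      (Finset.mem_image_of_mem _ ((hF3 _).mpr ((SimpleGraph.mem_edgeSet G3).mpr hij)))
  have adj01 : G3.Adj 0 1 := by decide
  have adj12 : G3.Adj 1 2 := by decide
  have adj02 : G3.Adj 0 2 := by decide
  have S1 : eWeight fV s(0,1) = vWeight G3 fE 2 :=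
    step hTc (haT 2) (haT 0) (haT 1) (hbT 0 1 adj01)
      (H3 h adj02).symm (H3 h adj12).symm (H3 h adj01)
      (H1 h adj01).symm (H2 h adj01).symm
  have S2 : eWeight fV s(1,2) = vWeight G3 fE 0 :=
    step hTc (haT 0) (haT 1) (haT 2) (hbT 1 2 adj12)
      (H3 h adj01) (H3 h adj02) (H3 h adj12)
      (H1 h adj12).symm (H2 h adj12).symm
  have S3 : eWeight fV s(0,2) = vWeight G3 fE 1 :=
    step hTc (haT 1) (haT 0) (haT 2) (hbT 0 2 adj02)
      (H3 h adj01).symm (H3 h adj12) (H3 h adj02)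
      (H1 h adj02).symm (H2 h adj02).symm
  -- expand the vertex weights
  have ha0 : vWeight G3 fE 0 = fE s(0,1) + fE s(0,2) := by
    rw [vWeight_eq_dec hF3]
    rw [show F3 = insert s(0,1) (insert s(1,2) {s(0,2)}) from rfl]
    rw [Finset.sum_insert (by decide), Finset.sum_insert (by decide), Finset.sum_singleton,
      if_pos (by decide), if_neg (by decide), if_pos (by decide)]
    omega
  have ha1 : vWeight G3 fE 1 = fE s(0,1) + fE s(1,2) := by
    rw [vWeight_eq_dec hF3]
    rw [show F3 = insert s(0,1) (insert s(1,2) {s(0,2)}) from rfl]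
    rw [Finset.sum_insert (by decide), Finset.sum_insert (by decide), Finset.sum_singleton,
      if_pos (by decide), if_pos (by decide), if_neg (by decide)]
    omega
  have ha2 : vWeight G3 fE 2 = fE s(1,2) + fE s(0,2) := by
    rw [vWeight_eq_dec hF3]
    rw [show F3 = insert s(0,1) (insert s(1,2) {s(0,2)}) from rfl]
    rw [Finset.sum_insert (by decide), Finset.sum_insert (by decide), Finset.sum_singleton,
      if_neg (by decide), if_pos (by decide), if_pos (by decide)]
    omega
  have hb01 : eWeight fV s(0,1) = fV 0 + fV 1 := rfl
  have hb12 : eWeight fV s(1,2) = fV 1 + fV 2 := rfl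
  have hb02 : eWeight fV s(0,2) = fV 0 + fV 2 := rfl
  -- total sum of the labels is 21
  have hrange := h.1.2
  rw [edgeFinset_eq_of _ hF3] at hrange
  rw [show Fintype.card (Fin 3) + F3.card = 6 by decide] at hrange
  have himg : Finset.image (Sum.elim fV (fun e : G3.edgeSet => fE e.1)) Finset.univ =
      Finset.Icc 1 6 := Finset.coe_injective (by
    rw [Finset.coe_image, Finset.coe_univ, Set.image_univ, hrange, Finset.coe_Icc])
  have hsum1 : ∑ x : Fin 3 ⊕ G3.edgeSet, Sum.elim fV (fun e : G3.edgeSet => fE e.1) x = 21 := by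
    calc ∑ x : Fin 3 ⊕ G3.edgeSet, Sum.elim fV (fun e : G3.edgeSet => fE e.1) x
        = ∑ y ∈ Finset.image (Sum.elim fV (fun e : G3.edgeSet => fE e.1)) Finset.univ, y :=
          (Finset.sum_image (f := fun y => y) (fun x _ y _ hxy => h.1.1 hxy)).symm
      _ = 21 := by rw [himg]; decide
  rw [Fintype.sum_sum_type] at hsum1
  simp only [Sum.elim_inl, Sum.elim_inr] at hsum1
  rw [Fin.sum_univ_three] at hsum1
  have hesum : ∑ e : G3.edgeSet, fE e.1 = fE s(0,1) + fE s(1,2) + fE s(0,2) := by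
    rw [← Finset.sum_subtype F3 hF3 fE]
    rw [show F3 = insert s(0,1) (insert s(1,2) {s(0,2)}) from rfl]
    rw [Finset.sum_insert (by decide), Finset.sum_insert (by decide), Finset.sum_singleton]
    omega
  rw [hesum] at hsum1
  rw [ha2, hb01] at S1
  rw [ha0, hb12] at S2
  rw [ha1, hb02] at S3
  omega

end Stmt12Aux

/-- `χ_lt(C₃) = 4`, `χ_lt(C₅) = 4` and `χ_lt(C₈) ≤ 5`. -/
theorem stmt12 :
    chiLT (SimpleGraph.cycleGraph 3) = 4 ∧ chiLT (SimpleGraph.cycleGraph 5) = 4 ∧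
      chiLT (SimpleGraph.cycleGraph 8) ≤ 5 := by
  refine ⟨?_, ?_, ?_⟩
  · refine le_antisymm (Nat.sInf_le ⟨v3, f3, hlta3, hwc3⟩) ?_
    refine le_csInf ⟨4, v3, f3, hlta3, hwc3⟩ ?_
    rintro n ⟨fV, fE, h, rfl⟩
    exact low3 h
  · refine le_antisymm (Nat.sInf_le ⟨v5, f5, hlta5, hwc5⟩) ?_
    refine le_csInf ⟨4, v5, f5, hlta5, hwc5⟩ ?_
    rintro n ⟨fV, fE, h, rfl⟩
    exact low5 h
  · exact Nat.sInf_le ⟨v8, f8, hlta8, hwc8⟩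


end LTA
end
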